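/- Let k_1, ..., k_n > 0, a_i, b_i ∈ ℕ with a_i ≤ b_i for all i, a_+ := Σ a_i ≥ 2, and let c, c', α > 0. Then the function g̃(y) = c·∏_{i=1}^n (y + k_i)^{a_i} − α·c'·∏_{i=1}^n (y + k_i)^{b_i} − y has at most three roots in (0, ∞), counted with multiplicity. -/

import Mathlib

open Polynomial

namespace Stmt15Aux

/-! ### Elementary inequalities for multisets of positive reals -/

lemma sum_nonneg' (t : Multiset ℝ) (h : ∀ x ∈ t, 0 ≤ x) : 0 ≤ t.sum := by
  induction t using Multiset.induction with
  | empty => simp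
  | cons a s ih =>
    rw [Multiset.sum_cons]
    have := ih (fun x hx => h x (Multiset.mem_cons_of_mem hx))
    have := h a (Multiset.mem_cons_self a s)
    linarith

lemma sum_pos' (t : Multiset ℝ) (h : ∀ x ∈ t, 0 < x) (h0 : t ≠ 0) : 0 < t.sum := by
  obtain ⟨a, ha⟩ := Multiset.exists_mem_of_ne_zero h0
  obtain ⟨s, rfl⟩ := Multiset.exists_cons_of_mem ha
  rw [Multiset.sum_cons]
  have h1 : 0 ≤ s.sum := sum_nonneg' s (fun x hx => (h x (Multiset.mem_cons_of_mem hx)).le)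
  have := h a (Multiset.mem_cons_self a s)
  linarith

lemma sum_sq_le (t : Multiset ℝ) (h : ∀ x ∈ t, 0 ≤ x) :
    (t.map (fun z => z^2)).sum ≤ t.sum ^ 2 := by
  induction t using Multiset.induction with
  | empty => simp
  | cons a s ih =>
    simp only [Multiset.map_cons, Multiset.sum_cons]
    have h1 := ih (fun x hx => h x (Multiset.mem_cons_of_mem hx))
    have h2 : 0 ≤ a := h a (Multiset.mem_cons_self a s)
    have h3 : 0 ≤ s.sum := sum_nonneg' s (fun x hx => h x (Multiset.mem_cons_of_mem hx))
    nlinarith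

lemma two_le_card_decomp (t : Multiset ℝ) (h : 2 ≤ Multiset.card t) :
    ∃ a s, t = a ::ₘ s ∧ s ≠ 0 := by
  have h0 : t ≠ 0 := by
    intro h0; rw [h0] at h; simp at h
  obtain ⟨a, ha⟩ := Multiset.exists_mem_of_ne_zero h0
  obtain ⟨s, rfl⟩ := Multiset.exists_cons_of_mem ha
  refine ⟨a, s, rfl, ?_⟩
  intro h0
  rw [h0] at h
  simp at h

lemma D_pos (t : Multiset ℝ) (ht : ∀ x ∈ t, 0 < x) (hc : 2 ≤ Multiset.card t) :
    (t.map (fun z => z^2)).sum < t.sum ^ 2 := by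
  obtain ⟨a, s, rfl, hs0⟩ := two_le_card_decomp t hc
  have ha : 0 < a := ht a (Multiset.mem_cons_self a s)
  have hs : 0 < s.sum := sum_pos' s (fun x hx => ht x (Multiset.mem_cons_of_mem hx)) hs0
  have h1 : (s.map (fun z => z^2)).sum ≤ s.sum ^ 2 :=
    sum_sq_le s (fun x hx => (ht x (Multiset.mem_cons_of_mem hx)).le)
  simp only [Multiset.map_cons, Multiset.sum_cons]
  nlinarith

lemma F_pos (t : Multiset ℝ) (ht : ∀ x ∈ t, 0 < x) (hc : 2 ≤ Multiset.card t) :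
    0 < t.sum ^ 4 + 3 * ((t.map (fun z => z^2)).sum) ^ 2
        - 4 * t.sum * ((t.map (fun z => z^3)).sum) := by
  set p1 := t.sum with hp1d
  set p2 := (t.map (fun z => z^2)).sum with hp2d
  set p3 := (t.map (fun z => z^3)).sum with hp3d
  have h0 : t ≠ 0 := by
    intro h0; rw [h0] at hc; simp at hc
  have hp1 : 0 < p1 := sum_pos' t ht h0
  have hp2 : 0 < p2 := by
    refine sum_pos' _ ?_ ?_
    · intro x hx
      obtain ⟨z, hz, rfl⟩ := Multiset.mem_map.1 hx
      have := ht z hz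
      positivity
    · simpa using h0
  have hD : p2 < p1 ^ 2 := D_pos t ht hc
  have hsq : Real.sqrt p2 ^ 2 = p2 := Real.sq_sqrt hp2.le
  have hsqnn : 0 ≤ Real.sqrt p2 := Real.sqrt_nonneg p2
  have h3 : p3 ≤ p2 * Real.sqrt p2 := by
    have hterm : ∀ z ∈ t, z^3 ≤ z^2 * Real.sqrt p2 := by
      intro z hz
      have hz0 : 0 < z := ht z hz
      have hz2 : z^2 ≤ p2 := by
        refine Multiset.single_le_sum ?_ _ ?_
        · intro x hx
          obtain ⟨w, hw, rfl⟩ := Multiset.mem_map.1 hx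
          positivity
        · exact Multiset.mem_map_of_mem _ hz
      have hzs : z ≤ Real.sqrt p2 := by
        nlinarith [hsq, hsqnn]
      nlinarith
    calc p3 ≤ (t.map (fun z => z^2 * Real.sqrt p2)).sum :=
            Multiset.sum_map_le_sum_map _ _ hterm
      _ = p2 * Real.sqrt p2 := by
            rw [hp2d]
            exact Multiset.sum_map_mul_right
  nlinarith [mul_nonneg hp2.le (sq_nonneg (p1 - Real.sqrt p2)), mul_le_mul_of_nonneg_left h3 hp1.le,
    sq_nonneg (p1^2 - p2)]


noncomputable def mpoly (m : Multiset ℝ) : ℝ[X] := (m.map (fun k => X + C k)).prod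

lemma mpoly_zero : mpoly 0 = 1 := by simp [mpoly]

lemma mpoly_cons (a : ℝ) (m : Multiset ℝ) : mpoly (a ::ₘ m) = (X + C a) * mpoly m := by
  simp [mpoly]

lemma mpoly_add (s t : Multiset ℝ) : mpoly (s + t) = mpoly s * mpoly t := by
  simp [mpoly, Multiset.prod_add]

lemma mpoly_nsmul_single (e : ℕ) (a : ℝ) : mpoly (e • ({a} : Multiset ℝ)) = (X + C a) ^ e := by
  induction e with
  | zero => simp [mpoly_zero]
  | succ n ih =>
    rw [succ_nsmul, mpoly_add, ih]
    simp [mpoly, pow_succ]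

lemma mpoly_sum {ι : Type*} (s : Finset ι) (f : ι → Multiset ℝ) :
    mpoly (∑ i ∈ s, f i) = ∏ i ∈ s, mpoly (f i) := by
  classical
  induction s using Finset.induction with
  | empty => simp [mpoly_zero]
  | @insert x t h ih => rw [Finset.sum_insert h, mpoly_add, ih, Finset.prod_insert h]

/-- The bridge: values of the first three derivatives of `mpoly m` at `y`. -/
lemma bridge (y : ℝ) (m : Multiset ℝ) (hm : ∀ x ∈ m, 0 < y + x) :
    0 < (mpoly m).eval y ∧
    (derivative (mpoly m)).eval y
      = (mpoly m).eval y * (m.map fun x => (y+x)⁻¹).sum ∧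
    (derivative (derivative (mpoly m))).eval y
      = (mpoly m).eval y *
        (((m.map fun x => (y+x)⁻¹).sum)^2 - ((m.map fun x => (y+x)⁻¹).map (fun z => z^2)).sum) ∧
    (derivative (derivative (derivative (mpoly m)))).eval y
      = (mpoly m).eval y *
        (((m.map fun x => (y+x)⁻¹).sum)^3
          - 3 * ((m.map fun x => (y+x)⁻¹).sum) * ((m.map fun x => (y+x)⁻¹).map (fun z => z^2)).sum
          + 2 * ((m.map fun x => (y+x)⁻¹).map (fun z => z^3)).sum) := by
  induction m using Multiset.induction with
  | empty => simp [mpoly_zero]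
  | cons a s ih =>
    obtain ⟨hv, h1, h2, h3⟩ := ih (fun x hx => hm x (Multiset.mem_cons_of_mem hx))
    have hya : 0 < y + a := hm a (Multiset.mem_cons_self a s)
    have hinv : (y + a) * (y + a)⁻¹ = 1 := mul_inv_cancel₀ hya.ne'
    set P := mpoly s with hPd
    set v := P.eval y with hvd
    set S1 := (s.map fun x => (y+x)⁻¹).sum with hS1d
    set S2 := ((s.map fun x => (y+x)⁻¹).map (fun z => z^2)).sum with hS2d
    set S3 := ((s.map fun x => (y+x)⁻¹).map (fun z => z^3)).sum with hS3d
    have hQ : mpoly (a ::ₘ s) = (X + C a) * P := mpoly_cons a s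
    have hQ1 : derivative (mpoly (a ::ₘ s)) = P + (X + C a) * derivative P := by
      rw [hQ, derivative_mul, derivative_X_add_C]; ring
    have hQ2 : derivative (derivative (mpoly (a ::ₘ s)))
        = 2 * derivative P + (X + C a) * derivative (derivative P) := by
      rw [hQ1, derivative_add, derivative_mul, derivative_X_add_C]; ring
    have hQ3 : derivative (derivative (derivative (mpoly (a ::ₘ s))))
        = 3 * derivative (derivative P) + (X + C a) * derivative (derivative (derivative P)) := by
      rw [hQ2, derivative_add, derivative_mul, derivative_mul, derivative_X_add_C]
      simp
      ring
    have e0 : (mpoly (a ::ₘ s)).eval y = (y + a) * v := by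
      rw [hQ]; simp [← hvd]
    have e1 : (derivative (mpoly (a ::ₘ s))).eval y = v + (y + a) * (v * S1) := by
      rw [hQ1]; simp [← hvd, h1]
    have e2 : (derivative (derivative (mpoly (a ::ₘ s)))).eval y
        = 2 * (v * S1) + (y + a) * (v * (S1^2 - S2)) := by
      rw [hQ2]; simp [h1, h2]
    have e3 : (derivative (derivative (derivative (mpoly (a ::ₘ s))))).eval y
        = 3 * (v * (S1^2 - S2)) + (y + a) * (v * (S1^3 - 3*S1*S2 + 2*S3)) := by
      rw [hQ3]; simp [h2, h3]
    simp only [Multiset.map_cons, Multiset.sum_cons, e0, e1, e2, e3]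
    refine ⟨by positivity, ?_, ?_, ?_⟩
    · linear_combination (-v) * hinv
    · linear_combination (-2 * v * S1) * hinv
    · linear_combination (-3 * v * (S1^2 - S2)) * hinv



lemma tpos (y : ℝ) (hy : 0 < y) (m : Multiset ℝ) (hm : ∀ x ∈ m, 0 < x) :
    ∀ z ∈ m.map fun x => (y+x)⁻¹, 0 < z := by
  intro z hz
  obtain ⟨x, hx, rfl⟩ := Multiset.mem_map.1 hz
  have := hm x hx
  positivity

lemma d2_pos (y : ℝ) (hy : 0 < y) (m : Multiset ℝ) (hm : ∀ x ∈ m, 0 < x)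
    (hc : 2 ≤ Multiset.card m) :
    0 < (derivative (derivative (mpoly m))).eval y := by
  obtain ⟨hv, -, h2, -⟩ := bridge y m (fun x hx => by have := hm x hx; linarith)
  rw [h2]
  have hD := D_pos (m.map fun x => (y+x)⁻¹) (tpos y hy m hm) (by simpa using hc)
  rw [Multiset.map_map] at hD ⊢
  nlinarith

/-- One-step strict increase of `P'''(y)/P''(y)` when adding a linear factor. -/
lemma step (y : ℝ) (hy : 0 < y) (a : ℝ) (ha : 0 < a) (m : Multiset ℝ)
    (hm : ∀ x ∈ m, 0 < x) (hc : 2 ≤ Multiset.card m) :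
    (derivative (derivative (derivative (mpoly m)))).eval y
        / (derivative (derivative (mpoly m))).eval y
      < (derivative (derivative (derivative (mpoly (a ::ₘ m))))).eval y
        / (derivative (derivative (mpoly (a ::ₘ m)))).eval y := by
  have hP2 := d2_pos y hy m hm hc
  have hQ2 := d2_pos y hy (a ::ₘ m) (by
    intro x hx
    rcases Multiset.mem_cons.1 hx with rfl | hx
    · exact ha
    · exact hm x hx) (by rw [Multiset.card_cons]; omega)
  rw [div_lt_div_iff₀ hP2 hQ2]
  obtain ⟨hv, h1, h2, h3⟩ := bridge y m (fun x hx => by have := hm x hx; linarith)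
  set P := mpoly m with hPd
  have hQd1 : derivative (mpoly (a ::ₘ m)) = P + (X + C a) * derivative P := by
    rw [mpoly_cons, derivative_mul, derivative_X_add_C]; ring
  have hQd2 : derivative (derivative (mpoly (a ::ₘ m)))
      = 2 * derivative P + (X + C a) * derivative (derivative P) := by
    rw [hQd1, derivative_add, derivative_mul, derivative_X_add_C]; ring
  have hQd3 : derivative (derivative (derivative (mpoly (a ::ₘ m))))
      = 3 * derivative (derivative P) + (X + C a) * derivative (derivative (derivative P)) := by
    rw [hQd2, derivative_add, derivative_mul, derivative_mul, derivative_X_add_C]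
    simp
    ring
  set v := P.eval y with hvd
  set S1 := (m.map fun x => (y+x)⁻¹).sum with hS1d
  set S2 := ((m.map fun x => (y+x)⁻¹).map (fun z => z^2)).sum with hS2d
  set S3 := ((m.map fun x => (y+x)⁻¹).map (fun z => z^3)).sum with hS3d
  have e2 : (derivative (derivative (mpoly (a ::ₘ m)))).eval y
      = 2 * (v * S1) + (y + a) * (v * (S1^2 - S2)) := by
    rw [hQd2]; simp [h1, h2]
  have e3 : (derivative (derivative (derivative (mpoly (a ::ₘ m))))).eval y
      = 3 * (v * (S1^2 - S2)) + (y + a) * (v * (S1^3 - 3*S1*S2 + 2*S3)) := by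
    rw [hQd3]; simp [h2, h3]
  rw [e2, e3, h2, h3]
  have hF := F_pos (m.map fun x => (y+x)⁻¹) (tpos y hy m hm) (by simpa using hc)
  rw [Multiset.map_map] at hF
  have hF' : 0 < S1^4 + 3*S2^2 - 4*S1*S3 := by
    convert hF using 2 <;> simp [hS1d, hS2d, hS3d, Multiset.map_map]
  nlinarith [mul_pos (mul_pos hv hv) hF']

/-- Adding any further positive factors (weakly/strictly) increases `P'''/P''` at `y`. -/
lemma chain (y : ℝ) (hy : 0 < y) (M : Multiset ℝ) (hM : ∀ x ∈ M, 0 < x)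
    (hc : 2 ≤ Multiset.card M) (e : Multiset ℝ) (he : ∀ x ∈ e, 0 < x) :
    (derivative (derivative (derivative (mpoly M)))).eval y
        / (derivative (derivative (mpoly M))).eval y
      ≤ (derivative (derivative (derivative (mpoly (M + e))))).eval y
        / (derivative (derivative (mpoly (M + e)))).eval y
    ∧ (e ≠ 0 →
      (derivative (derivative (derivative (mpoly M)))).eval y
        / (derivative (derivative (mpoly M))).eval y
      < (derivative (derivative (derivative (mpoly (M + e))))).eval y
        / (derivative (derivative (mpoly (M + e)))).eval y) := by
  induction e using Multiset.induction with
  | empty => simp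
  | cons a s ih =>
    obtain ⟨ihle, -⟩ := ih (fun x hx => he x (Multiset.mem_cons_of_mem hx))
    have hs : ∀ x ∈ M + s, 0 < x := by
      intro x hx
      rcases Multiset.mem_add.1 hx with hx | hx
      · exact hM x hx
      · exact he x (Multiset.mem_cons_of_mem hx)
    have hstep := step y hy a (he a (Multiset.mem_cons_self a s)) (M + s) hs
      (le_trans hc (by rw [Multiset.card_add]; omega))
    have hrw : M + a ::ₘ s = a ::ₘ (M + s) := by
      simp [Multiset.cons_swap, Multiset.add_cons]
    constructor
    · rw [hrw]; exact le_trans ihle hstep.le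
    · intro _; rw [hrw]; exact lt_of_le_of_lt ihle hstep



/-- Multiplicity drop: a root of `p` of multiplicity `m` is a root of `p'u - pu'`
of multiplicity at least `m - 1`. -/
lemma rootMult_le (p u : ℝ[X]) (x : ℝ)
    (hq : derivative p * u - p * derivative u ≠ 0) :
    p.rootMultiplicity x - 1 ≤ (derivative p * u - p * derivative u).rootMultiplicity x := by
  have hp : p ≠ 0 := by
    rintro rfl
    simp at hq
  set m := p.rootMultiplicity x with hm
  rcases Nat.eq_zero_or_pos m with h0 | hpos
  · simp [h0]
  obtain ⟨h, hh⟩ := (pow_rootMultiplicity_dvd p x : (X - C x) ^ m ∣ p)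
  rw [le_rootMultiplicity_iff hq]
  have hpow : (X - C x) ^ m = (X - C x) ^ (m - 1) * (X - C x) := by
    rw [← pow_succ, Nat.sub_add_cancel hpos]
  have hd : derivative p = C (m : ℝ) * (X - C x) ^ (m - 1) * h
      + (X - C x) ^ m * derivative h := by
    rw [hh, derivative_mul, derivative_pow, derivative_X_sub_C, mul_one]
  refine ⟨C (m : ℝ) * h * u + (X - C x) * (derivative h * u - h * derivative u), ?_⟩
  rw [hd, hh, hpow]
  ring

/-- Rolle + multiplicity counting: positive roots of `p` (with multiplicity) are at most
one more than positive roots of `p' * u - p * u'`, provided `u` does not vanish on `(0,∞)`. -/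
theorem keyB (p u : ℝ[X]) (hp : p ≠ 0) (hu : ∀ y : ℝ, 0 < y → u.eval y ≠ 0)
    (hq : derivative p * u - p * derivative u ≠ 0) :
    (p.roots.filter (fun y => 0 < y)).card ≤
      ((derivative p * u - p * derivative u).roots.filter (fun y => 0 < y)).card + 1 := by
  set q := derivative p * u - p * derivative u with hqd
  set P := p.roots.filter (fun y => 0 < y) with hPd
  set Q := q.roots.filter (fun y => 0 < y) with hQd
  have hfin : P.toFinset.card ≤ (Q.toFinset \ P.toFinset).card + 1 := by
    refine Finset.card_le_diff_of_interleaved fun x hx y hy hxy _ => ?_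
    rw [Multiset.mem_toFinset, hPd, Multiset.mem_filter, mem_roots hp] at hx hy
    obtain ⟨hpx, hx0⟩ := hx
    obtain ⟨hpy, _⟩ := hy
    have hux : ∀ t ∈ Set.Icc x y, u.eval t ≠ 0 := fun t ht => hu t (lt_of_lt_of_le hx0 ht.1)
    have hcont : ContinuousOn (fun t => p.eval t / u.eval t) (Set.Icc x y) :=
      (p.continuousOn).div (u.continuousOn) hux
    have hfxy : (fun t => p.eval t / u.eval t) x = (fun t => p.eval t / u.eval t) y := by
      simp only [hpx.eq_zero, hpy.eq_zero, zero_div]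
    obtain ⟨z, hz, hz0⟩ := exists_deriv_eq_zero hxy hcont hfxy
    have hzpos : 0 < z := hx0.trans hz.1
    have huz : u.eval z ≠ 0 := hu z hzpos
    have hder : deriv (fun t => p.eval t / u.eval t) z = q.eval z / (u.eval z) ^ 2 := by
      rw [show (fun t => p.eval t / u.eval t) = (fun t => p.eval t) / (fun t => u.eval t) from rfl,
        deriv_div (p.differentiable.differentiableAt) (u.differentiable.differentiableAt) huz,
        Polynomial.deriv, Polynomial.deriv, hqd]
      simp
    have hqz : q.eval z = 0 := by
      rw [hder] at hz0
      field_simp at hz0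
      simpa using hz0
    refine ⟨z, ?_, hz.1, hz.2⟩
    rw [Multiset.mem_toFinset, hQd, Multiset.mem_filter, mem_roots hq]
    exact ⟨hqz, hzpos⟩
  have hcP : ∀ x ∈ P.toFinset, P.count x = p.rootMultiplicity x := by
    intro x hx
    have hx0 : 0 < x := (Multiset.mem_filter.1 (Multiset.mem_toFinset.1 hx)).2
    rw [hPd, Multiset.count_filter, if_pos hx0, count_roots]
  have hcQ : ∀ x : ℝ, 0 < x → Q.count x = q.rootMultiplicity x := by
    intro x hx0
    rw [hQd, Multiset.count_filter, if_pos hx0, count_roots]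
  calc Multiset.card P = ∑ x ∈ P.toFinset, P.count x := (Multiset.toFinset_sum_count_eq _).symm
    _ = ∑ x ∈ P.toFinset, (P.count x - 1 + 1) :=
      (Finset.sum_congr rfl fun x hx => (tsub_add_cancel_of_le <|
        Nat.succ_le_iff.2 <| Multiset.count_pos.2 <| Multiset.mem_toFinset.1 hx).symm)
    _ = (∑ x ∈ P.toFinset, (P.count x - 1)) + P.toFinset.card := by
      simp only [Finset.sum_add_distrib, Finset.card_eq_sum_ones]
    _ ≤ (∑ x ∈ P.toFinset, Q.count x) + ((Q.toFinset \ P.toFinset).card + 1) := by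
      refine add_le_add (Finset.sum_le_sum fun x hx => ?_) hfin
      have hx0 : 0 < x := (Multiset.mem_filter.1 (Multiset.mem_toFinset.1 hx)).2
      rw [hcP x hx, hcQ x hx0]
      exact rootMult_le p u x hq
    _ ≤ (∑ x ∈ P.toFinset, Q.count x) +
          ((∑ x ∈ Q.toFinset \ P.toFinset, Q.count x) + 1) := by
      refine add_le_add_right (add_le_add_left ((Finset.card_eq_sum_ones _).trans_le ?_) _) _
      refine Finset.sum_le_sum fun x hx => Nat.succ_le_iff.2 ?_
      rw [Multiset.count_pos, ← Multiset.mem_toFinset]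
      exact (Finset.mem_sdiff.1 hx).1
    _ ≤ Multiset.card Q + 1 := by
      rw [← add_assoc, ← Finset.sum_union Finset.disjoint_sdiff]
      have hsub : Q.toFinset ⊆ P.toFinset ∪ (Q.toFinset \ P.toFinset) := by
        intro x hx
        rcases Finset.mem_union.1 (Finset.mem_union_left _ hx) with h | h
        · by_cases hxP : x ∈ P.toFinset
          · exact Finset.mem_union_left _ hxP
          · exact Finset.mem_union_right _ (Finset.mem_sdiff.2 ⟨hx, hxP⟩)
        · exact Finset.mem_union_right _ h
      have : ∑ x ∈ P.toFinset ∪ (Q.toFinset \ P.toFinset), Q.count x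
          = ∑ x ∈ Q.toFinset, Q.count x := by
        refine (Finset.sum_subset hsub ?_).symm
        intro x _ hx
        exact Multiset.count_eq_zero.2 (fun hc => hx (Multiset.mem_toFinset.2 hc))
      rw [this, Multiset.toFinset_sum_count_eq]


lemma card_roots_pos_eq_zero (q : ℝ[X]) (h : ∀ y : ℝ, 0 < y → q.eval y ≠ 0) :
    (q.roots.filter (fun y => 0 < y)).card = 0 := by
  rw [Multiset.card_eq_zero, Multiset.filter_eq_nil]
  intro z hz hz0
  exact h z hz0 (isRoot_of_mem_roots hz)


end Stmt15Aux


open Stmt15Aux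

theorem stmt15 (n : ℕ) (k : Fin n → ℝ) (hk : ∀ i, 0 < k i)
    (a b : Fin n → ℕ) (hab : ∀ i, a i ≤ b i) (ha : 2 ≤ ∑ i, a i)
    (c c' α : ℝ) (hc : 0 < c) (hc' : 0 < c') (hα : 0 < α)
    (g : ℝ[X])
    (hg : g = C c * ∏ i, (X + C (k i)) ^ a i
        - C (α * c') * ∏ i, (X + C (k i)) ^ b i - X) :
    (g.roots.filter (fun y => 0 < y)).card ≤ 3 := by
  classical
  have hprod : ∀ e : Fin n → ℕ,
      mpoly (∑ i, e i • ({k i} : Multiset ℝ)) = ∏ i, (X + C (k i)) ^ e i := by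
    intro e
    rw [mpoly_sum]
    exact Finset.prod_congr rfl (fun i _ => mpoly_nsmul_single _ _)
  have hmem : ∀ (e : Fin n → ℕ) (x : ℝ), x ∈ (∑ i, e i • ({k i} : Multiset ℝ)) → 0 < x := by
    intro e x hx
    obtain ⟨i, -, hi⟩ := Multiset.mem_sum.1 hx
    rw [Multiset.mem_nsmul] at hi
    rw [Multiset.mem_singleton.1 hi.2]
    exact hk i
  have hcard : ∀ e : Fin n → ℕ,
      Multiset.card (∑ i, e i • ({k i} : Multiset ℝ)) = ∑ i, e i := by
    intro e
    rw [Multiset.card_sum]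
    simp
  set Ma : Multiset ℝ := ∑ i, a i • ({k i} : Multiset ℝ) with hMad
  set Me : Multiset ℝ := ∑ i, (b i - a i) • ({k i} : Multiset ℝ) with hMed
  set γ : ℝ[X] := mpoly Ma with hγd
  set ω : ℝ[X] := mpoly (Ma + Me) with hωd
  have hMapos : ∀ x ∈ Ma, 0 < x := hmem a
  have hMepos : ∀ x ∈ Me, 0 < x := hmem _
  have hca : 2 ≤ Multiset.card Ma := by rw [hcard a]; exact ha
  have hγeq : γ = ∏ i, (X + C (k i)) ^ a i := hprod a
  have hωeq : ω = ∏ i, (X + C (k i)) ^ b i := by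
    rw [hωd, mpoly_add, ← hγd, hγeq, hprod (fun i => b i - a i), ← Finset.prod_mul_distrib]
    exact Finset.prod_congr rfl fun i _ => by
      rw [← pow_add, Nat.add_sub_cancel' (hab i)]
  have hgg : g = C c * γ - C (α * c') * ω - X := by rw [hg, hγeq, hωeq]
  have hγ2pos : ∀ y : ℝ, 0 < y → 0 < (derivative (derivative γ)).eval y :=
    fun y hy => d2_pos y hy Ma hMapos hca
  have hg1 : derivative g = C c * derivative γ - C (α * c') * derivative ω - 1 := by
    rw [hgg]
    simp [derivative_sub, derivative_C_mul, derivative_X]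
  have hg2 : derivative (derivative g)
      = C c * derivative (derivative γ) - C (α * c') * derivative (derivative ω) := by
    rw [hg1]
    simp [derivative_sub, derivative_C_mul]
  have hg3 : derivative (derivative (derivative g))
      = C c * derivative (derivative (derivative γ))
        - C (α * c') * derivative (derivative (derivative ω)) := by
    rw [hg2]
    simp [derivative_sub, derivative_C_mul]
  by_cases hMe0 : Me = 0
  · -- ω = γ
    have hωγ : ω = γ := by rw [hωd, hMe0, add_zero, hγd]
    by_cases hA : c - α * c' = 0
    · have hCC : (C c : ℝ[X]) = C (α * c') := by
        rw [← sub_eq_zero, ← C_sub, hA, C_0]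
      have hgx : g = -X := by rw [hgg, hωγ, hCC]; ring
      rw [hgx, roots_neg, roots_X]
      simp [Multiset.filter_singleton]
    · -- g'' = C (c - α c') * γ''
      have hg2' : derivative (derivative g)
          = C (c - α * c') * derivative (derivative γ) := by
        rw [hg2, hωγ, C_sub]; ring
      have hg2ne : ∀ y : ℝ, 0 < y → (derivative (derivative g)).eval y ≠ 0 := by
        intro y hy
        rw [hg2']
        simp only [eval_mul, eval_C]
        exact mul_ne_zero hA (hγ2pos y hy).ne'
      have hddg : derivative (derivative g) ≠ 0 := by
        intro h
        exact hg2ne 1 one_pos (by rw [h]; simp)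
      have hdg : derivative g ≠ 0 := by
        intro h
        exact hddg (by rw [h, derivative_zero])
      have hg0 : g ≠ 0 := by
        intro h
        exact hdg (by rw [h, derivative_zero])
      have e1 : derivative g * 1 - g * derivative 1 = derivative g := by simp
      have k1 := keyB g 1 hg0 (fun y _ => by simp) (by rw [e1]; exact hdg)
      rw [e1] at k1
      have e2 : derivative (derivative g) * 1 - derivative g * derivative 1
          = derivative (derivative g) := by simp
      have k2 := keyB (derivative g) 1 hdg (fun y _ => by simp) (by rw [e2]; exact hddg)
      rw [e2] at k2
      have z2 := card_roots_pos_eq_zero _ hg2ne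
      omega
  · -- main case
    have hcb : 2 ≤ Multiset.card (Ma + Me) := by
      rw [Multiset.card_add]; omega
    have hMbpos : ∀ x ∈ Ma + Me, 0 < x := by
      intro x hx
      rcases Multiset.mem_add.1 hx with hx | hx
      · exact hMapos x hx
      · exact hMepos x hx
    have hω2pos : ∀ y : ℝ, 0 < y → 0 < (derivative (derivative ω)).eval y :=
      fun y hy => d2_pos y hy (Ma + Me) hMbpos hcb
    have hW : ∀ y : ℝ, 0 < y →
        (derivative (derivative (derivative γ))).eval y * (derivative (derivative ω)).eval y
        < (derivative (derivative (derivative ω))).eval y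
            * (derivative (derivative γ)).eval y := by
      intro y hy
      have h := (chain y hy Ma hMapos hca Me hMepos).2 hMe0
      rw [div_lt_div_iff₀ (hγ2pos y hy) (hω2pos y hy)] at h
      exact h
    -- q3 for keyB with p = g'', u = γ''
    have hq3eq : derivative (derivative (derivative g)) * derivative (derivative γ)
          - derivative (derivative g) * derivative (derivative (derivative γ))
        = C (α * c') * (derivative (derivative ω) * derivative (derivative (derivative γ))
            - derivative (derivative (derivative ω)) * derivative (derivative γ)) := by
      rw [hg3, hg2]; ring
    have hq3ne : ∀ y : ℝ, 0 < y →
        (derivative (derivative (derivative g)) * derivative (derivative γ)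
          - derivative (derivative g) * derivative (derivative (derivative γ))).eval y ≠ 0 := by
      intro y hy
      rw [hq3eq]
      simp only [eval_mul, eval_C, eval_sub]
      have := hW y hy
      have hαc : 0 < α * c' := mul_pos hα hc'
      nlinarith
    have hq3 : derivative (derivative (derivative g)) * derivative (derivative γ)
          - derivative (derivative g) * derivative (derivative (derivative γ)) ≠ 0 := by
      intro h
      exact hq3ne 1 one_pos (by rw [h]; simp)
    have hddg : derivative (derivative g) ≠ 0 := by
      intro h
      apply hq3
      rw [h, derivative_zero]
      ring
    have hdg : derivative g ≠ 0 := fun h => hddg (by rw [h, derivative_zero])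
    have hg0 : g ≠ 0 := fun h => hdg (by rw [h, derivative_zero])
    have e1 : derivative g * 1 - g * derivative 1 = derivative g := by simp
    have k1 := keyB g 1 hg0 (fun y _ => by simp) (by rw [e1]; exact hdg)
    rw [e1] at k1
    have e2 : derivative (derivative g) * 1 - derivative g * derivative 1
        = derivative (derivative g) := by simp
    have k2 := keyB (derivative g) 1 hdg (fun y _ => by simp) (by rw [e2]; exact hddg)
    rw [e2] at k2
    have k3 := keyB (derivative (derivative g)) (derivative (derivative γ)) hddg
      (fun y hy => (hγ2pos y hy).ne') hq3
    have z3 := card_roots_pos_eq_zero _ hq3ne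
    omega
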